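/- Given an ω-Shannon inequality over a finite set V, with left-hand side Σ_{ℓ∈[L]} λ_ℓ·h(U_ℓ) + Σ_{j∈[J]} ( α_j·h(X_j|G_j) + β_j·h(Y_j|G_j) + ζ_j·h(Z_j|G_j) + κ_j·h(G_j) ) and right-hand side Σ_{i∈[I]} w_i·h(Y_i|X_i), there exist finitely many subsets X_p, Y_p (p∈[P]) and X_q, Y_q, Z_q (q∈[Q]) of V and nonnegative reals m_p (p∈[P]) and s_q (q∈[Q]) such that the left-hand side equals Σ_{i∈[I]} w_i·h(Y_i|X_i) − Σ_{p∈[P]} m_p·h(Y_p|X_p) − Σ_{q∈[Q]} s_q·h(Y_q;Z_q|X_q) identically, i.e., for every function h from subsets of V to ℝ with h(∅) = 0. -/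

import Mathlib

open Finset

/-- A polymatroid on a finite vertex type `V`. -/
def IsPolymatroid {V : Type*} [DecidableEq V] [Fintype V] (h : Finset V → ℝ) : Prop :=
  h ∅ = 0 ∧ (∀ A : Finset V, 0 ≤ h A) ∧
    (∀ A B : Finset V, A ⊆ B → h A ≤ h B) ∧
    (∀ A B : Finset V, h (A ∪ B) + h (A ∩ B) ≤ h A + h B)

/-- The conditional term `h(Y|X) = h(X ∪ Y) − h(X)`. -/
noncomputable def condH {V : Type*} [DecidableEq V]
    (h : Finset V → ℝ) (Y X : Finset V) : ℝ :=
  h (X ∪ Y) - h X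

/-- The conditional mutual-information term
`h(Y;Z|X) = h(X∪Y) + h(X∪Z) − h(X) − h(X∪Y∪Z)`. -/
noncomputable def condMI {V : Type*} [DecidableEq V]
    (h : Finset V → ℝ) (Y Z X : Finset V) : ℝ :=
  h (X ∪ Y) + h (X ∪ Z) - h X - h (X ∪ Y ∪ Z)

/-- An ω-dominant triple `(α, β, ζ)`. -/
def OmegaDominant (ω α β ζ : ℝ) : Prop :=
  1 ≤ α ∧ 1 ≤ β ∧ 0 ≤ ζ ∧ ω ≤ α + β + ζ


section Farkas

open scoped RealInnerProductSpace

variable {ι : Type*} [Fintype ι] [DecidableEq ι]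

/-- Conic Carathéodory: any nonnegative combination of a finite family can be
rewritten as a nonnegative combination supported on a linearly independent subfamily. -/
lemma cone_caratheodory_aux {H : Type*} [AddCommGroup H] [Module ℝ H] (g : ι → H) :
    ∀ (n : ℕ) (c : ι → ℝ), (univ.filter fun i => c i ≠ 0).card ≤ n → (∀ i, 0 ≤ c i) →
    ∃ (t : Finset ι) (c' : ι → ℝ), LinearIndependent ℝ (fun i : t => g i) ∧
      (∀ i, 0 ≤ c' i) ∧ (∀ i ∉ t, c' i = 0) ∧ ∑ i, c' i • g i = ∑ i, c i • g i := by
  intro n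
  induction n with
  | zero =>
    intro c hcard hc
    have hz : ∀ i, c i = 0 := by
      intro i
      by_contra hne
      have : i ∈ univ.filter fun i => c i ≠ 0 := by simp [hne]
      have := Finset.card_pos.mpr ⟨i, this⟩
      omega
    haveI : IsEmpty ((∅ : Finset ι) : Type _) := ⟨fun x => Finset.notMem_empty _ x.2⟩
    exact ⟨∅, c, linearIndependent_empty_type, hc, fun i _ => hz i, rfl⟩
  | succ n ih =>
    intro c hcard hc
    set t := univ.filter fun i => c i ≠ 0 with ht
    by_cases hLI : LinearIndependent ℝ (fun i : t => g i)
    · refine ⟨t, c, hLI, hc, ?_, rfl⟩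
      intro i hi
      by_contra hne
      exact hi (by simp [ht, hne])
    · rw [Fintype.not_linearIndependent_iff] at hLI
      obtain ⟨d, hdsum, i₁, hi₁⟩ := hLI
      -- extend d to ι by zero
      set D : ι → ℝ := fun i => if h : i ∈ t then d ⟨i, h⟩ else 0 with hD
      have hDt : ∀ i ∉ t, D i = 0 := fun i hi => by simp [hD, hi]
      have hDsum : ∑ i, D i • g i = 0 := by
        have h1 : ∑ i ∈ t, D i • g i = ∑ i, D i • g i :=
          Finset.sum_subset (Finset.subset_univ t) (fun i _ hit => by simp [hDt i hit])
        have h2 : ∑ i ∈ t, D i • g i = ∑ i : t, D (i : ι) • g (i : ι) :=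
          (Finset.sum_coe_sort t _).symm
        have h3 : ∑ i : t, D (i : ι) • g (i : ι) = ∑ i : t, d i • g (i : ι) := by
          apply Finset.sum_congr rfl
          intro i _
          simp [hD, i.2]
        rw [← h1, h2, h3, hdsum]
      -- choose a version with a positive entry
      have hEx : ∃ E : ι → ℝ, (∑ i, E i • g i = 0) ∧ (∀ i ∉ t, E i = 0) ∧ ∃ i, 0 < E i := by
        rcases lt_trichotomy (D (i₁ : ι)) 0 with hlt | heq | hgt
        · refine ⟨-D, by simp [hDsum], fun i hi => by simp [hDt i hi], ⟨i₁, by simpa using hlt⟩⟩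
        · exfalso; apply hi₁
          have : D (i₁ : ι) = d i₁ := by simp [hD, i₁.2]
          rw [← this, heq]
        · exact ⟨D, hDsum, hDt, ⟨i₁, hgt⟩⟩
      obtain ⟨E, hE0, hEt, i₂, hi₂⟩ := hEx
      set pos := t.filter fun i => 0 < E i with hpos
      have hi₂t : i₂ ∈ t := by
        by_contra hno
        rw [hEt i₂ hno] at hi₂
        exact lt_irrefl 0 hi₂
      have hi₂pos : i₂ ∈ pos := by simp [hpos, hi₂t, hi₂]
      obtain ⟨i₀, hi₀pos, hmin⟩ :=
        Finset.exists_min_image pos (fun i => c i / E i) ⟨i₂, hi₂pos⟩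
      have hi₀t : i₀ ∈ t := (Finset.mem_filter.mp hi₀pos).1
      have hEi₀ : 0 < E i₀ := (Finset.mem_filter.mp hi₀pos).2
      set r := c i₀ / E i₀ with hr
      have hr0 : 0 ≤ r := div_nonneg (hc i₀) hEi₀.le
      set c' : ι → ℝ := fun i => c i - r * E i with hc'
      have hc'0 : ∀ i, 0 ≤ c' i := by
        intro i
        by_cases hEi : 0 < E i
        · have hit : i ∈ t := by
            by_contra hno
            rw [hEt i hno] at hEi; exact lt_irrefl 0 hEi
          have : r ≤ c i / E i := hmin i (by simp [hpos, hit, hEi])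
          have : r * E i ≤ c i := by
            rwa [le_div_iff₀ hEi] at this
          simp [hc']; linarith
        · push_neg at hEi
          have : r * E i ≤ 0 := mul_nonpos_of_nonneg_of_nonpos hr0 hEi
          have := hc i
          simp [hc']; linarith
      have hc'i₀ : c' i₀ = 0 := by
        simp [hc', hr, div_mul_cancel₀ _ hEi₀.ne']
      have hsupp : (univ.filter fun i => c' i ≠ 0) ⊆ t.erase i₀ := by
        intro i hi
        rw [Finset.mem_filter] at hi
        rw [Finset.mem_erase]
        constructor
        · rintro rfl; exact hi.2 hc'i₀
        · by_contra hno
          apply hi.2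
          have h1 : c i = 0 := by
            by_contra hne
            exact hno (by simp [ht, hne])
          simp [hc', h1, hEt i hno]
      have hcard' : (univ.filter fun i => c' i ≠ 0).card ≤ n := by
        have h1 := Finset.card_le_card hsupp
        have h2 : (t.erase i₀).card = t.card - 1 := Finset.card_erase_of_mem hi₀t
        have h3 : 0 < t.card := Finset.card_pos.mpr ⟨i₀, hi₀t⟩
        omega
      have hsum' : ∑ i, c' i • g i = ∑ i, c i • g i := by
        have : ∑ i, c' i • g i = ∑ i, c i • g i - r • ∑ i, E i • g i := by
          rw [Finset.smul_sum, ← Finset.sum_sub_distrib]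
          apply Finset.sum_congr rfl
          intro i _
          simp [hc', sub_smul, smul_smul]
        rw [this, hE0, smul_zero, sub_zero]
      obtain ⟨t', c'', hLI', h0', hz', hsum''⟩ := ih c' hcard' hc'0
      exact ⟨t', c'', hLI', h0', hz', by rw [hsum'', hsum']⟩

variable {H : Type*} [NormedAddCommGroup H] [InnerProductSpace ℝ H] [FiniteDimensional ℝ H]

/-- The linear map sending coefficients on `t` to the corresponding combination. -/
noncomputable def coneMap (g : ι → H) (t : Finset ι) : ({x // x ∈ t} → ℝ) →ₗ[ℝ] H where
  toFun c := ∑ i : t, c i • g (i : ι)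
  map_add' a b := by simp [add_smul, Finset.sum_add_distrib]
  map_smul' r a := by
    simp [Finset.smul_sum, smul_smul]

lemma isClosed_coneSet (g : ι → H) :
    IsClosed {x : H | ∃ c : ι → ℝ, (∀ i, 0 ≤ c i) ∧ x = ∑ i, c i • g i} := by
  classical
  have hrep : {x : H | ∃ c : ι → ℝ, (∀ i, 0 ≤ c i) ∧ x = ∑ i, c i • g i} =
      ⋃ t : Finset ι,
        (if LinearIndependent ℝ (fun i : t => g i) then
          (coneMap g t) '' {c | ∀ i, 0 ≤ c i} else ∅) := by
    ext x
    simp only [Set.mem_setOf_eq, Set.mem_iUnion]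
    constructor
    · rintro ⟨c, hc, rfl⟩
      obtain ⟨t, c', hLI, h0, hz, hsum⟩ :=
        cone_caratheodory_aux g (univ.filter fun i => c i ≠ 0).card c le_rfl hc
      refine ⟨t, ?_⟩
      rw [if_pos hLI]
      refine ⟨fun i => c' i, fun i => h0 _, ?_⟩
      show ∑ i : t, c' (i : ι) • g (i : ι) = _
      rw [Finset.sum_coe_sort t (fun i => c' i • g i)]
      rw [Finset.sum_subset (Finset.subset_univ t) (fun i _ hit => by simp [hz i hit])]
      exact hsum
    · rintro ⟨t, hx⟩
      by_cases hLI : LinearIndependent ℝ (fun i : t => g i)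
      · rw [if_pos hLI] at hx
        obtain ⟨c, hc, rfl⟩ := hx
        refine ⟨fun i => if h : i ∈ t then c ⟨i, h⟩ else 0, ?_, ?_⟩
        · intro i
          by_cases h : i ∈ t
          · simpa [h] using hc ⟨i, h⟩
          · simp [h]
        · show ∑ i : {x // x ∈ t}, c i • g (i : ι) = _
          have h1 : ∑ i : {x // x ∈ t}, c i • g (i : ι) =
              ∑ i : {x // x ∈ t},
                (fun j => if h : j ∈ t then c ⟨j, h⟩ else 0) (i : ι) • g (i : ι) :=
            Finset.sum_congr rfl fun i _ => by simp [i.2]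
          rw [h1, Finset.sum_coe_sort t
            (fun j => (fun j => if h : j ∈ t then c ⟨j, h⟩ else 0) j • g j)]
          exact Finset.sum_subset (Finset.subset_univ t) (fun i _ hit => by simp [hit])
      · rw [if_neg hLI] at hx
        exact absurd hx (Set.notMem_empty _)
  rw [hrep]
  apply isClosed_iUnion_of_finite
  intro t
  by_cases hLI : LinearIndependent ℝ (fun i : t => g i)
  · rw [if_pos hLI]
    have hker : LinearMap.ker (coneMap g t) = ⊥ := by
      rw [LinearMap.ker_eq_bot']
      intro c hc
      have := Fintype.linearIndependent_iff.mp hLI c hc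
      funext i
      exact this i
    have hemb := LinearMap.isClosedEmbedding_of_injective hker
    apply hemb.isClosedMap
    have : {c : {x // x ∈ t} → ℝ | ∀ i, 0 ≤ c i} = ⋂ i, {c | 0 ≤ c i} := by
      ext c; simp
    rw [this]
    exact isClosed_iInter fun i => isClosed_le continuous_const (continuous_apply i)
  · rw [if_neg hLI]
    exact isClosed_empty

/-- Farkas' lemma for finitely generated cones in a finite-dimensional real
inner product space. -/
theorem farkas_cone (g : ι → H) (F : H)
    (hF : ∀ x : H, (∀ i, 0 ≤ ⟪g i, x⟫) → 0 ≤ ⟪F, x⟫) :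
    ∃ c : ι → ℝ, (∀ i, 0 ≤ c i) ∧ F = ∑ i, c i • g i := by
  classical
  set S : Set H := {x : H | ∃ c : ι → ℝ, (∀ i, 0 ≤ c i) ∧ x = ∑ i, c i • g i} with hS
  set K : ConvexCone ℝ H :=
    { carrier := S
      smul_mem' := by
        rintro r hr x ⟨c, hc, rfl⟩
        refine ⟨fun i => r * c i, fun i => mul_nonneg hr.le (hc i), ?_⟩
        rw [Finset.smul_sum]
        exact Finset.sum_congr rfl fun i _ => by simp [smul_smul]
      add_mem' := by
        rintro x ⟨c, hc, rfl⟩ y ⟨c', hc', rfl⟩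
        refine ⟨fun i => c i + c' i, fun i => add_nonneg (hc i) (hc' i), ?_⟩
        rw [← Finset.sum_add_distrib]
        exact Finset.sum_congr rfl fun i _ => by simp [add_smul] }
    with hK
  have hzero : (0 : H) ∈ S := ⟨0, fun i => le_rfl, by simp⟩
  have hclosed : IsClosed (K : Set H) := isClosed_coneSet g
  have hgS : ∀ i, g i ∈ S := by
    intro i
    refine ⟨fun j => if j = i then 1 else 0, fun j => by positivity, ?_⟩
    simp [ite_smul]
  by_contra hno
  have hFS : F ∉ S := fun hm => hno hm
  obtain ⟨f, u, hfS, hfF⟩ := geometric_hahn_banach_closed_point K.convex hclosed hFS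
  have hu : 0 < u := by simpa using hfS 0 hzero
  have hfg : ∀ i, f (g i) ≤ 0 := by
    intro i
    by_contra hpos
    push_neg at hpos
    have hm : (u / f (g i)) • g i ∈ K := K.smul_mem (div_pos hu hpos) (hgS i)
    have := hfS _ hm
    rw [map_smul, smul_eq_mul, div_mul_cancel₀ _ hpos.ne'] at this
    exact lt_irrefl _ this
  set y := (InnerProductSpace.toDual ℝ H).symm f
  have hy : ∀ z, ⟪y, z⟫ = f z := fun z => InnerProductSpace.toDual_symm_apply
  have h1 := hF (-y) (fun i => by rw [inner_neg_right, real_inner_comm, hy]; linarith [hfg i])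
  rw [inner_neg_right, real_inner_comm, hy] at h1
  linarith

end Farkas

section Shannon

open scoped RealInnerProductSpace

variable {V : Type*} [DecidableEq V] [Fintype V]

/-- The vector in `EuclideanSpace ℝ (Finset V)` corresponding to evaluation at `A`
(with the `∅` coordinate zeroed out). -/
noncomputable def dvec (A : Finset V) : EuclideanSpace ℝ (Finset V) :=
  if A = ∅ then 0 else EuclideanSpace.single A (1 : ℝ)

lemma inner_dvec {x : EuclideanSpace ℝ (Finset V)} {h : Finset V → ℝ}
    (hh : ∀ A, h A = if A = ∅ then 0 else x A) (A : Finset V) :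
    ⟪dvec A, x⟫ = h A := by
  by_cases hA : A = ∅
  · simp [dvec, hA, hh]
  · simp [dvec, hA, hh A, EuclideanSpace.inner_single_left]

/-- The elementary generators: monotonicity terms (left) and
submodularity terms (right). -/
noncomputable def gvec :
    (Finset V × Finset V) ⊕ (Finset V × Finset V × Finset V) →
      EuclideanSpace ℝ (Finset V)
  | .inl p => dvec (p.2 ∪ p.1) - dvec p.2
  | .inr t => dvec (t.2.2 ∪ t.1) + dvec (t.2.2 ∪ t.2.1) - dvec t.2.2 -
      dvec (t.2.2 ∪ t.1 ∪ t.2.1)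

lemma inner_gvec_inl {x : EuclideanSpace ℝ (Finset V)} {h : Finset V → ℝ}
    (hh : ∀ A, h A = if A = ∅ then 0 else x A) (p : Finset V × Finset V) :
    ⟪gvec (.inl p), x⟫ = condH h p.1 p.2 := by
  show ⟪dvec (p.2 ∪ p.1) - dvec p.2, x⟫ = _
  rw [inner_sub_left, inner_dvec hh, inner_dvec hh, condH]

lemma inner_gvec_inr {x : EuclideanSpace ℝ (Finset V)} {h : Finset V → ℝ}
    (hh : ∀ A, h A = if A = ∅ then 0 else x A) (t : Finset V × Finset V × Finset V) :
    ⟪gvec (.inr t), x⟫ = condMI h t.1 t.2.1 t.2.2 := by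
  show ⟪dvec (t.2.2 ∪ t.1) + dvec (t.2.2 ∪ t.2.1) - dvec t.2.2 -
      dvec (t.2.2 ∪ t.1 ∪ t.2.1), x⟫ = _
  rw [inner_sub_left, inner_sub_left, inner_add_left,
    inner_dvec hh, inner_dvec hh, inner_dvec hh, inner_dvec hh, condMI]

end Shannon

/-- every ω-Shannon inequality can be written, identically in
any set function `h` with `h(∅) = 0`, as the right-hand side minus a
nonnegative combination of monotonicity terms `h(Y_p|X_p)` and submodularity
terms `h(Y_q;Z_q|X_q)`. -/
theorem omega_shannon_identity {V : Type*} [DecidableEq V] [Fintype V]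
    (ω : ℝ) (hω₂ : 2 ≤ ω) (hω₃ : ω ≤ 3)
    {L J I : ℕ}
    (U : Fin L → Finset V) (Xj Yj Zj Gj : Fin J → Finset V)
    (Xi Yi : Fin I → Finset V)
    (lam : Fin L → ℝ) (α β ζ κ : Fin J → ℝ) (w : Fin I → ℝ)
    (hlam : ∀ ℓ, 0 ≤ lam ℓ) (hα : ∀ j, 0 ≤ α j) (hβ : ∀ j, 0 ≤ β j)
    (hζ : ∀ j, 0 ≤ ζ j) (hκ : ∀ j, 0 < κ j) (hw : ∀ i, 0 ≤ w i)
    (hdom : ∀ j, OmegaDominant ω (α j / κ j) (β j / κ j) (ζ j / κ j))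
    (hvalid : ∀ h : Finset V → ℝ, IsPolymatroid h →
      (∑ ℓ, lam ℓ * h (U ℓ)) +
        (∑ j, (α j * condH h (Xj j) (Gj j) + β j * condH h (Yj j) (Gj j) +
               ζ j * condH h (Zj j) (Gj j) + κ j * h (Gj j))) ≤
      ∑ i, w i * condH h (Yi i) (Xi i)) :
    ∃ (P Q : ℕ) (Xp Yp : Fin P → Finset V) (Xq Yq Zq : Fin Q → Finset V)
      (m : Fin P → ℝ) (s : Fin Q → ℝ),
      (∀ p, 0 ≤ m p) ∧ (∀ q, 0 ≤ s q) ∧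
      ∀ h : Finset V → ℝ, h ∅ = 0 →
        (∑ ℓ, lam ℓ * h (U ℓ)) +
          (∑ j, (α j * condH h (Xj j) (Gj j) + β j * condH h (Yj j) (Gj j) +
                 ζ j * condH h (Zj j) (Gj j) + κ j * h (Gj j))) =
        (∑ i, w i * condH h (Yi i) (Xi i))
          - (∑ p, m p * condH h (Yp p) (Xp p))
          - (∑ q, s q * condMI h (Yq q) (Zq q) (Xq q)) := by
  classical
  set F : EuclideanSpace ℝ (Finset V) :=
    (∑ i, w i • (dvec (Xi i ∪ Yi i) - dvec (Xi i))) -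
    (∑ ℓ, lam ℓ • dvec (U ℓ)) -
    ∑ j, (α j • (dvec (Gj j ∪ Xj j) - dvec (Gj j)) +
          β j • (dvec (Gj j ∪ Yj j) - dvec (Gj j)) +
          ζ j • (dvec (Gj j ∪ Zj j) - dvec (Gj j)) +
          κ j • dvec (Gj j)) with hFdef
  have innerF : ∀ (x : EuclideanSpace ℝ (Finset V)) (h : Finset V → ℝ),
      (∀ A, h A = if A = ∅ then 0 else x A) →
      (inner ℝ F x : ℝ) =
        (∑ i, w i * condH h (Yi i) (Xi i)) -
        ((∑ ℓ, lam ℓ * h (U ℓ)) +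
          ∑ j, (α j * condH h (Xj j) (Gj j) + β j * condH h (Yj j) (Gj j) +
                ζ j * condH h (Zj j) (Gj j) + κ j * h (Gj j))) := by
    intro x h hh
    rw [hFdef]
    simp only [inner_sub_left, inner_add_left, sum_inner, real_inner_smul_left,
      inner_dvec hh, condH]
    ring
  have hFx : ∀ x : EuclideanSpace ℝ (Finset V),
      (∀ i, 0 ≤ (inner ℝ (gvec i) x : ℝ)) → 0 ≤ (inner ℝ F x : ℝ) := by
    intro x hgx
    set h : Finset V → ℝ := fun A => if A = ∅ then 0 else x A with hhdef
    have hh : ∀ A, h A = if A = ∅ then 0 else x A := fun A => rfl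
    have h0 : h ∅ = 0 := by simp [hhdef]
    have hpoly : IsPolymatroid h := by
      refine ⟨h0, ?_, ?_, ?_⟩
      · intro A
        have := hgx (.inl (A, ∅))
        rw [inner_gvec_inl hh] at this
        simpa [condH, h0] using this
      · intro A B hAB
        have := hgx (.inl (B, A))
        rw [inner_gvec_inl hh] at this
        simp only [condH] at this
        rw [Finset.union_eq_right.mpr hAB] at this
        linarith
      · intro A B
        have := hgx (.inr (A, B, A ∩ B))
        rw [inner_gvec_inr hh] at this
        simp only [condMI] at this
        rw [Finset.union_eq_right.mpr (Finset.inter_subset_left),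
          Finset.union_eq_right.mpr (Finset.inter_subset_right)] at this
        linarith
    have hv := hvalid h hpoly
    rw [innerF x h hh]
    linarith
  obtain ⟨c, hc, hFc⟩ := farkas_cone gvec F hFx
  set eP := (Fintype.equivFin (Finset V × Finset V)).symm with heP
  set eQ := (Fintype.equivFin (Finset V × Finset V × Finset V)).symm with heQ
  refine ⟨_, _, fun p => (eP p).2, fun p => (eP p).1, fun q => (eQ q).2.2,
    fun q => (eQ q).1, fun q => (eQ q).2.1,
    fun p => c (.inl (eP p)), fun q => c (.inr (eQ q)),
    fun p => hc _, fun q => hc _, ?_⟩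
  intro h h0
  set x : EuclideanSpace ℝ (Finset V) := (WithLp.equiv 2 (Finset V → ℝ)).symm h with hx
  have hh : ∀ A, h A = if A = ∅ then 0 else x A := by
    intro A
    by_cases hA : A = ∅
    · simp [hA, h0]
    · simp [hA, hx]
  have E1 := innerF x h hh
  have E2 : (inner ℝ F x : ℝ) = ∑ i, c i * (inner ℝ (gvec i) x : ℝ) := by
    rw [hFc, sum_inner]
    exact Finset.sum_congr rfl fun i _ => real_inner_smul_left _ _ _
  rw [Fintype.sum_sum_type] at E2
  have E3 : ∑ a : Finset V × Finset V, c (.inl a) * (inner ℝ (gvec (.inl a)) x : ℝ) =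
      ∑ p, c (.inl (eP p)) * condH h (eP p).1 (eP p).2 := by
    rw [← Fintype.sum_equiv eP
      (fun p => c (.inl (eP p)) * condH h (eP p).1 (eP p).2)
      (fun a => c (.inl a) * (inner ℝ (gvec (.inl a)) x : ℝ))
      (fun p => by simp only [inner_gvec_inl hh])]
  have E4 : ∑ b : Finset V × Finset V × Finset V,
        c (.inr b) * (inner ℝ (gvec (.inr b)) x : ℝ) =
      ∑ q, c (.inr (eQ q)) * condMI h (eQ q).1 (eQ q).2.1 (eQ q).2.2 := by
    rw [← Fintype.sum_equiv eQ
      (fun q => c (.inr (eQ q)) * condMI h (eQ q).1 (eQ q).2.1 (eQ q).2.2)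
      (fun b => c (.inr b) * (inner ℝ (gvec (.inr b)) x : ℝ))
      (fun q => by simp only [inner_gvec_inr hh])]
  rw [E3, E4] at E2
  linarith
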